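/- Let G be a finite simple graph and let w be a vertex of G that is adjacent to two distinct vertices v₁ and v₂ each of degree 1. Then φ(G) ≤ Σ_{u ∈ N(w)\{v₁}} φ(G − (N[w] ∪ N[u])) + φ(G − {w, v₁, v₂}) + φ(G − N[w]). -/

import Mathlib

open SimpleGraph Finset

/-- `F` is a dissociation set of `G`: the induced subgraph `G[F]` has maximum degree at most 1,
i.e. every vertex of `F` has at most one neighbor inside `F`. -/
def IsDissocSet {V : Type*} (G : SimpleGraph V) (F : Set V) : Prop :=
  ∀ v ∈ F, ({u ∈ F | G.Adj v u} : Set V).ncard ≤ 1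

/-- A maximal dissociation set: a dissociation set not properly contained in any other
dissociation set. -/
def IsMaximalDissocSet {V : Type*} (G : SimpleGraph V) (F : Set V) : Prop :=
  IsDissocSet G F ∧ ∀ F' : Set V, IsDissocSet G F' → F ⊆ F' → F = F'

/-- `φ(G)`: the number of maximal dissociation sets of `G`. -/
noncomputable def numMaximalDissoc {V : Type*} (G : SimpleGraph V) : ℕ :=
  Set.ncard {F : Set V | IsMaximalDissocSet G F}

/-- `φ(G − S)`: the number of maximal dissociation sets of the subgraph of `G`
induced on the complement of `S`. -/
noncomputable def phiDel {V : Type*} (G : SimpleGraph V) (S : Set V) : ℕ :=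
  numMaximalDissoc (G.induce Sᶜ)

section Helpers

variable {V : Type*} [Fintype V] (G : SimpleGraph V)

lemma ncard_preimage_val_le {T : Set V} (A : Set V) :
    ((Subtype.val ⁻¹' A : Set ↥T)).ncard ≤ A.ncard := by
  rw [← Set.ncard_image_of_injective _ Subtype.val_injective]
  exact Set.ncard_le_ncard (Set.image_preimage_subset _ _) (Set.toFinite _)

lemma restr_dissoc {T : Set V} {F : Set V} (hF : IsDissocSet G F) :
    IsDissocSet (G.induce Tᶜ) (Subtype.val ⁻¹' F) := by
  intro v hv
  have h1 : ({u ∈ (Subtype.val ⁻¹' F : Set ↥Tᶜ) | (G.induce Tᶜ).Adj v u} : Set ↥Tᶜ)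
      = Subtype.val ⁻¹' ({x ∈ F | G.Adj ↑v x}) := by
    ext u
    simp [comap_adj]
  rw [h1]
  exact (ncard_preimage_val_le _).trans (hF ↑v hv)

/-- Generic class-counting lemma: if every `F` in a class `S'` of maximal dissociation sets
meets `T` exactly in `F₀`, and dissociation sets of `G − T` lift (with `F₀` added) to
dissociation sets of `G`, then the class injects into maximal dissociation sets of `G − T`. -/
lemma card_class_le (S' : Set (Set V)) (T F₀ : Set V)
    (hmax : ∀ F ∈ S', IsMaximalDissocSet G F)
    (hT : ∀ F ∈ S', F ∩ T = F₀)
    (hlift : ∀ R : Set ↥(Tᶜ), IsDissocSet (G.induce Tᶜ) R →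
      IsDissocSet G (Subtype.val '' R ∪ F₀)) :
    S'.ncard ≤ phiDel G T := by
  have hF₀T : ∀ F ∈ S', F₀ ⊆ T := fun F hF => (hT F hF) ▸ Set.inter_subset_right
  have key : ∀ F ∈ S', F = Subtype.val '' (Subtype.val ⁻¹' F : Set ↥Tᶜ) ∪ F₀ := by
    intro F hF
    ext x
    constructor
    · intro hx
      by_cases hxT : x ∈ T
      · right; rw [← hT F hF]; exact ⟨hx, hxT⟩
      · left; exact ⟨⟨x, hxT⟩, hx, rfl⟩
    · rintro (⟨⟨y, hy⟩, hyF, rfl⟩ | hx)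
      · exact hyF
      · rw [← hT F hF] at hx; exact hx.1
  apply Set.ncard_le_ncard_of_injOn (fun F => (Subtype.val ⁻¹' F : Set ↥Tᶜ))
  · intro F hF
    have hFm := hmax F hF
    refine ⟨restr_dissoc G hFm.1, ?_⟩
    intro R' hR' hsub
    have hd : IsDissocSet G (Subtype.val '' R' ∪ F₀) := hlift R' hR'
    have hFsub : F ⊆ Subtype.val '' R' ∪ F₀ := by
      rw [key F hF]
      exact Set.union_subset_union_left _ (Set.image_mono hsub)
    have hEq := hFm.2 _ hd hFsub
    have hpre : (Subtype.val ⁻¹' F₀ : Set ↥Tᶜ) = ∅ := by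
      ext ⟨x, hx⟩
      simp only [Set.mem_preimage, Set.mem_empty_iff_false, iff_false]
      exact fun h => hx (hF₀T F hF h)
    show (Subtype.val ⁻¹' F : Set ↥Tᶜ) = R'
    rw [hEq, Set.preimage_union, Set.preimage_image_eq _ Subtype.val_injective, hpre,
      Set.union_empty]
  · intro F hF F' hF' h
    have h' : (Subtype.val ⁻¹' F : Set ↥Tᶜ) = Subtype.val ⁻¹' F' := h
    rw [key F hF, key F' hF', h']

lemma ncard_biUnion_le' {α ι : Type*} (t : Finset ι) (s : ι → Set α)
    (h : ∀ i ∈ t, (s i).Finite) :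
    (⋃ i ∈ t, s i).ncard ≤ ∑ i ∈ t, (s i).ncard := by
  classical
  induction t using Finset.induction with
  | empty => simp
  | insert _ _ hi ih =>
    rename_i a t'
    rw [Finset.sum_insert hi]
    have hu : (⋃ i ∈ insert a t', s i) = s a ∪ ⋃ i ∈ t', s i := by
      simp [Set.biUnion_insert]
    rw [hu]
    have h1 : (s a ∪ ⋃ i ∈ t', s i).ncard ≤ (s a).ncard + (⋃ i ∈ t', s i).ncard :=
Set.ncard_union_le _ _
    exact h1.trans (Nat.add_le_add_left (ih fun i hi => h i (Finset.mem_insert_of_mem hi)) _)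

end Helpers

theorem numMaximalDissoc_le_rec_of_two_leaves {V : Type*} [Fintype V] [DecidableEq V]
    (G : SimpleGraph V) [DecidableRel G.Adj] (w v₁ v₂ : V) (hne : v₁ ≠ v₂)
    (h₁ : G.Adj w v₁) (h₂ : G.Adj w v₂)
    (hd₁ : G.degree v₁ = 1) (hd₂ : G.degree v₂ = 1) :
    numMaximalDissoc G ≤
      (∑ u ∈ G.neighborFinset w \ {v₁},
          phiDel G (insert w (G.neighborSet w) ∪ insert u (G.neighborSet u))) +
        phiDel G {w, v₁, v₂} + phiDel G (insert w (G.neighborSet w)) := by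
  classical
  -- leaf facts
  have hnv : ∀ v : V, G.Adj w v → G.degree v = 1 → G.neighborSet v = {w} := by
    intro v hv hd
    have hmem : w ∈ G.neighborFinset v := by
      rw [mem_neighborFinset]; exact hv.symm
    obtain ⟨a, ha⟩ := Finset.card_eq_one.mp hd
    rw [ha, Finset.mem_singleton] at hmem
    subst hmem
    have : G.neighborFinset v = {w} := ha
    have h2 := congrArg (fun s : Finset V => (s : Set V)) this
    rw [SimpleGraph.neighborFinset_def, Set.coe_toFinset] at h2
    simpa using h2
  have hnv₁ : G.neighborSet v₁ = {w} := hnv v₁ h₁ hd₁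
  have hnv₂ : G.neighborSet v₂ = {w} := hnv v₂ h₂ hd₂
  set S : Set (Set V) := {F | IsMaximalDissocSet G F} with hSdef
  set SA : Set (Set V) := {F ∈ S | w ∉ F} with hSAdef
  set SB : Set (Set V) := {F ∈ S | w ∈ F} with hSBdef
  set SU : V → Set (Set V) := fun u => {F ∈ S | w ∈ F ∧ u ∈ F} with hSUdef
  -- Step 1: split off w ∈ F
  have hsplit : numMaximalDissoc G ≤ SA.ncard + SB.ncard := by
    have hcup : S = SA ∪ SB := by
      ext F
      constructor
      · intro hF
        by_cases h : w ∈ F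
        · exact Or.inr ⟨hF, h⟩
        · exact Or.inl ⟨hF, h⟩
      · rintro (⟨h, _⟩ | ⟨h, _⟩) <;> exact h
    have : numMaximalDissoc G = S.ncard := rfl
    rw [this, hcup]
    exact Set.ncard_union_le _ _
  -- Step 2: if w ∈ F then F contains a neighbor of w
  have hBmem : ∀ F ∈ SB, ∃ u ∈ G.neighborFinset w, F ∈ SU u := by
    intro F hF
    obtain ⟨hFS, hwF⟩ := hF
    by_contra hcon
    push_neg at hcon
    have hnone : ∀ u ∈ G.neighborSet w, u ∉ F := by
      intro u hu huF
      exact absurd ⟨hFS, hwF, huF⟩ (hcon u (by rwa [mem_neighborFinset]))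
    have hv₂F : v₂ ∉ F := hnone v₂ h₂
    have hdis : IsDissocSet G (insert v₂ F) := by
      intro x hx
      rcases Set.mem_insert_iff.mp hx with rfl | hxF
      · -- x = v₂
        have hsub : {y ∈ insert x F | G.Adj x y} ⊆ {w} := by
          intro y hy
          have : y ∈ G.neighborSet x := hy.2
          rw [hnv₂] at this
          exact this
        exact (Set.ncard_le_ncard hsub (Set.toFinite _)).trans_eq (Set.ncard_singleton w)
      · by_cases hxw : x = w
        · subst hxw
          have hsub : {y ∈ insert v₂ F | G.Adj x y} ⊆ {v₂} := by
            rintro y ⟨hy, hadj⟩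
            rcases Set.mem_insert_iff.mp hy with rfl | hyF
            · rfl
            · exact absurd hyF (hnone y hadj)
          exact (Set.ncard_le_ncard hsub (Set.toFinite _)).trans_eq (Set.ncard_singleton v₂)
        · have heq : {y ∈ insert v₂ F | G.Adj x y} = {y ∈ F | G.Adj x y} := by
            ext y
            simp only [Set.mem_setOf_eq, Set.mem_insert_iff]
            constructor
            · rintro ⟨rfl | hyF, hadj⟩
              · have hm : x ∈ G.neighborSet y := hadj.symm
                rw [hnv₂] at hm
                exact absurd hm (by simpa using hxw)
              · exact ⟨hyF, hadj⟩
            · rintro ⟨hyF, hadj⟩; exact ⟨Or.inr hyF, hadj⟩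
          rw [heq]
          exact hFS.1 x hxF
    have := hFS.2 _ hdis (Set.subset_insert _ _)
    exact hv₂F (this ▸ Set.mem_insert v₂ F)
  -- Step 3: SB is covered by the SU u
  have hSBle : SB.ncard ≤ ∑ u ∈ G.neighborFinset w, (SU u).ncard := by
    have hsub : SB ⊆ ⋃ u ∈ G.neighborFinset w, SU u := by
      intro F hF
      obtain ⟨u, hu, huF⟩ := hBmem F hF
      exact Set.mem_biUnion hu huF
    exact (Set.ncard_le_ncard hsub (Set.toFinite _)).trans
      (ncard_biUnion_le' _ _ fun i _ => Set.toFinite _)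
  -- Step 4: bound SA
  have hSA : SA.ncard ≤ phiDel G {w, v₁, v₂} := by
    have hleaf_mem : ∀ F ∈ SA, ∀ v : V, G.neighborSet v = {w} → v ∈ F := by
      intro F hF v hv
      obtain ⟨hFS, hwF⟩ := hF
      by_contra hvF
      have hdis : IsDissocSet G (insert v F) := by
        intro x hx
        rcases Set.mem_insert_iff.mp hx with rfl | hxF
        · have hsub : {y ∈ insert x F | G.Adj x y} ⊆ ∅ := by
            rintro y ⟨hy, hadj⟩
            have hyw : y = w := by
              have hm : y ∈ G.neighborSet x := hadj
              rw [hv] at hm; exact hm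
            subst hyw
            rcases Set.mem_insert_iff.mp hy with h | h
            · exact (G.ne_of_adj hadj h.symm).elim
            · exact hwF h
          exact le_trans (Set.ncard_le_ncard hsub (Set.toFinite _)) (by simp)
        · have heq : {y ∈ insert v F | G.Adj x y} = {y ∈ F | G.Adj x y} := by
            ext y
            simp only [Set.mem_setOf_eq, Set.mem_insert_iff]
            constructor
            · rintro ⟨rfl | hyF, hadj⟩
              · have : x = w := by
                  have hm : x ∈ G.neighborSet y := hadj.symm
                  rw [hv] at hm; exact hm
                exact absurd (this ▸ hxF) hwF
              · exact ⟨hyF, hadj⟩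
            · rintro ⟨hyF, hadj⟩; exact ⟨Or.inr hyF, hadj⟩
          rw [heq]; exact hFS.1 x hxF
      have := hFS.2 _ hdis (Set.subset_insert _ _)
      exact hvF (this ▸ Set.mem_insert v F)
    apply card_class_le G SA {w, v₁, v₂} {v₁, v₂}
    · exact fun F hF => hF.1
    · intro F hF
      ext x
      simp only [Set.mem_inter_iff, Set.mem_insert_iff, Set.mem_singleton_iff]
      constructor
      · rintro ⟨hxF, rfl | rfl | rfl⟩
        · exact absurd hxF hF.2
        · exact Or.inl rfl
        · exact Or.inr rfl
      · rintro (rfl | rfl)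
        · exact ⟨hleaf_mem F hF x hnv₁, Or.inr (Or.inl rfl)⟩
        · exact ⟨hleaf_mem F hF x hnv₂, Or.inr (Or.inr rfl)⟩
    · intro R hR x hx
      have hwnot : w ∉ (Subtype.val '' R ∪ {v₁, v₂} : Set V) := by
        rintro (⟨b, _, hbw⟩ | h)
        · exact b.2 (by rw [hbw]; exact Or.inl rfl)
        · rcases h with h | h
          · exact G.ne_of_adj h₁ h
          · exact G.ne_of_adj h₂ h
      rcases hx with ⟨a, haR, rfl⟩ | hx
      · -- x in the image of R
        have hsub : {y ∈ Subtype.val '' R ∪ {v₁, v₂} | G.Adj ↑a y}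
            ⊆ Subtype.val '' {b ∈ R | (G.induce ({w, v₁, v₂} : Set V)ᶜ).Adj a b} := by
          rintro y ⟨hy, hadj⟩
          rcases hy with ⟨b, hbR, rfl⟩ | hy
          · exact ⟨b, ⟨hbR, by simpa [comap_adj] using hadj⟩, rfl⟩
          · exfalso
            rcases hy with rfl | rfl
            · have hm : (a : V) ∈ G.neighborSet y := hadj.symm
              rw [hnv₁] at hm
              exact a.2 (by rw [hm]; exact Or.inl rfl)
            · have hm : (a : V) ∈ G.neighborSet y := hadj.symm
              rw [hnv₂] at hm
              exact a.2 (by rw [hm]; exact Or.inl rfl)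
        calc {y ∈ Subtype.val '' R ∪ {v₁, v₂} | G.Adj ↑a y}.ncard
            ≤ (Subtype.val '' {b ∈ R | (G.induce ({w, v₁, v₂} : Set V)ᶜ).Adj a b}).ncard :=
              Set.ncard_le_ncard hsub (Set.toFinite _)
          _ = {b ∈ R | (G.induce ({w, v₁, v₂} : Set V)ᶜ).Adj a b}.ncard :=
              Set.ncard_image_of_injective _ Subtype.val_injective
          _ ≤ 1 := hR a haR
      · -- x = v₁ or v₂
        have hset : ∀ v : V, G.neighborSet v = {w} →
            {y ∈ Subtype.val '' R ∪ {v₁, v₂} | G.Adj v y} ⊆ ∅ := by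
          rintro v hv y ⟨hy, hadj⟩
          have : y = w := by
            have hm : y ∈ G.neighborSet v := hadj
            rw [hv] at hm; exact hm
          rw [this] at hy
          exact hwnot hy
        rcases hx with hx | hx
        · rw [show x = v₁ from hx]
          exact le_trans (Set.ncard_le_ncard (hset v₁ hnv₁) (Set.toFinite _)) (by simp)
        · rw [show x = v₂ from hx]
          exact le_trans (Set.ncard_le_ncard (hset v₂ hnv₂) (Set.toFinite _)) (by simp)
  -- Step 5: bound SU u for u ∈ N(w)
  have hSU : ∀ u ∈ G.neighborFinset w,
      (SU u).ncard ≤ phiDel G (insert w (G.neighborSet w) ∪ insert u (G.neighborSet u)) := by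
    intro u hu
    rw [mem_neighborFinset] at hu
    set T : Set V := insert w (G.neighborSet w) ∪ insert u (G.neighborSet u) with hTdef
    have hwT : w ∈ T := Or.inl (Or.inl rfl)
    have huT : u ∈ T := Or.inr (Or.inl rfl)
    have hNwT : G.neighborSet w ⊆ T := fun y hy => Or.inl (Or.inr hy)
    have hNuT : G.neighborSet u ⊆ T := fun y hy => Or.inr (Or.inr hy)
    apply card_class_le G (SU u) T {w, u}
    · exact fun F hF => hF.1
    · intro F hF
      obtain ⟨hFS, hwF, huF⟩ := hF
      have hone : ∀ z ∈ F, ∀ x y : V, G.Adj z x → G.Adj z y → x ∈ F → y ∈ F → x = y := by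
        intro z hz x y hx hy hxF hyF
        by_contra hxy
        have : 1 < {c ∈ F | G.Adj z c}.ncard := by
          rw [Set.one_lt_ncard (Set.toFinite _)]
          exact ⟨x, ⟨hxF, hx⟩, y, ⟨hyF, hy⟩, hxy⟩
        exact absurd (hFS.1 z hz) (by omega)
      ext x
      simp only [Set.mem_inter_iff, Set.mem_insert_iff, Set.mem_singleton_iff]
      constructor
      · rintro ⟨hxF, hxT⟩
        rcases hxT with (rfl | hx) | (rfl | hx)
        · exact Or.inl rfl
        · exact Or.inr (hone w hwF x u hx hu hxF huF)
        · exact Or.inr rfl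
        · exact Or.inl (hone u huF x w hx hu.symm hxF hwF)
      · rintro (rfl | rfl)
        · exact ⟨hwF, hwT⟩
        · exact ⟨huF, huT⟩
    · intro R hR x hx
      have himg_not_adj_w : ∀ b : ↥Tᶜ, ¬ G.Adj w ↑b := fun b hadj => b.2 (hNwT hadj)
      have himg_not_adj_u : ∀ b : ↥Tᶜ, ¬ G.Adj u ↑b := fun b hadj => b.2 (hNuT hadj)
      rcases hx with ⟨a, haR, rfl⟩ | hx
      · have hsub : {y ∈ Subtype.val '' R ∪ {w, u} | G.Adj ↑a y}
            ⊆ Subtype.val '' {b ∈ R | (G.induce Tᶜ).Adj a b} := by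
          rintro y ⟨hy, hadj⟩
          rcases hy with ⟨b, hbR, rfl⟩ | hy
          · exact ⟨b, ⟨hbR, by simpa [comap_adj] using hadj⟩, rfl⟩
          · exfalso
            rcases hy with rfl | rfl
            · exact himg_not_adj_w a hadj.symm
            · exact himg_not_adj_u a hadj.symm
        calc {y ∈ Subtype.val '' R ∪ {w, u} | G.Adj ↑a y}.ncard
            ≤ (Subtype.val '' {b ∈ R | (G.induce Tᶜ).Adj a b}).ncard :=
              Set.ncard_le_ncard hsub (Set.toFinite _)
          _ = {b ∈ R | (G.induce Tᶜ).Adj a b}.ncard :=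
              Set.ncard_image_of_injective _ Subtype.val_injective
          _ ≤ 1 := hR a haR
      · rcases hx with hx | hx
        · -- x = w
          rw [show x = w from hx]
          have hsub : {y ∈ Subtype.val '' R ∪ {w, u} | G.Adj w y} ⊆ {u} := by
            rintro y ⟨hy, hadj⟩
            rcases hy with ⟨b, hbR, rfl⟩ | hy
            · exact absurd hadj (himg_not_adj_w b)
            · rcases hy with rfl | rfl
              · exact absurd rfl (G.ne_of_adj hadj)
              · rfl
          exact (Set.ncard_le_ncard hsub (Set.toFinite _)).trans_eq (Set.ncard_singleton u)
        · -- x = u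
          rw [show x = u from hx]
          have hsub : {y ∈ Subtype.val '' R ∪ {w, u} | G.Adj u y} ⊆ {w} := by
            rintro y ⟨hy, hadj⟩
            rcases hy with ⟨b, hbR, rfl⟩ | hy
            · exact absurd hadj (himg_not_adj_u b)
            · rcases hy with rfl | rfl
              · rfl
              · exact absurd rfl (G.ne_of_adj hadj)
          exact (Set.ncard_le_ncard hsub (Set.toFinite _)).trans_eq (Set.ncard_singleton w)
  -- Step 6: the v₁ term collapses to phiDel of N[w]
  have hv₁mem : v₁ ∈ G.neighborFinset w := by rw [mem_neighborFinset]; exact h₁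
  have hTv₁ : insert w (G.neighborSet w) ∪ insert v₁ (G.neighborSet v₁)
      = insert w (G.neighborSet w) := by
    apply Set.union_eq_self_of_subset_right
    rw [hnv₁]
    intro y hy
    rcases hy with rfl | hy
    · exact Or.inr h₁
    · exact Or.inl hy
  have hSUv₁ : (SU v₁).ncard ≤ phiDel G (insert w (G.neighborSet w)) := by
    have := hSU v₁ hv₁mem
    rwa [hTv₁] at this
  -- Assemble
  have hsum : ∑ u ∈ G.neighborFinset w, (SU u).ncard
      = (∑ u ∈ G.neighborFinset w \ {v₁}, (SU u).ncard) + (SU v₁).ncard :=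
    Finset.sum_eq_sum_sdiff_singleton_add hv₁mem _
  have hsum2 : (∑ u ∈ G.neighborFinset w \ {v₁}, (SU u).ncard)
      ≤ ∑ u ∈ G.neighborFinset w \ {v₁},
          phiDel G (insert w (G.neighborSet w) ∪ insert u (G.neighborSet u)) :=
    Finset.sum_le_sum fun u hu => hSU u (Finset.mem_sdiff.mp hu).1
  have := hsplit.trans (Nat.add_le_add hSA hSBle)
  rw [hsum] at this
  omega
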